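/- Let B be a balanced bipartite graph with parts V1, V2 of size n each, with minimum degree δ(B) ≥ n/2 + 1. Then every subset S of the vertices with |S| = n + 2 induces a subgraph containing at least n + 2 edges, and hence B[S] contains a cycle. -/

import Mathlib

open Finset SimpleGraph SimpleGraph.Walk

lemma forest_lt {V : Type} [Fintype V] [DecidableEq V] [Nonempty V]
    (G : SimpleGraph V) [Fintype G.edgeSet] (h : G.IsAcyclic) :
    G.edgeFinset.card < Fintype.card V := by
  classical
  set root : V → V := fun v => Quot.out (G.connectedComponentMk v) with hrootdef
  have hroot_mk : ∀ v, G.connectedComponentMk (root v) = G.connectedComponentMk v :=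
    fun v => Quot.out_eq _
  have hreach : ∀ v, G.Reachable v (root v) :=
    fun v => (ConnectedComponent.exact (hroot_mk v).symm)
  have hex : ∀ v, ∃ p : G.Walk v (root v), p.IsPath :=
    fun v => (hreach v).elim_path fun p => ⟨p.1, p.2⟩
  choose f hf using hex
  have hf' : ∀ v (q : G.Walk v (root v)), q.IsPath → q = f v := fun v q hq =>
    Subtype.ext_iff.mp (h.path_unique ⟨q, hq⟩ ⟨f v, hf v⟩)
  have hrootroot : ∀ v, root (root v) = root v := fun v => by
    rw [hrootdef]
    exact congrArg Quot.out (hroot_mk v)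
  obtain ⟨v0⟩ := ‹Nonempty V›
  set F : V → Sym2 V := fun v =>
    if hv : v = root v then s(v, v)
    else ((f v).firstDart (not_nil_of_ne hv)).edge with hF
  have key : ∀ x y : V, G.Adj x y → (f x).length ≤ (f y).length →
      y ≠ root y ∧ F y = s(x, y) := by
    intro x y hadj hxy
    have hr : root x = root y := by
      rw [hrootdef]
      exact congrArg Quot.out (ConnectedComponent.connectedComponentMk_eq_of_adj hadj)
    have hy : y ≠ root y := by
      intro hy0
      have h1 : (Walk.nil.copy rfl hy0 : G.Walk y (root y)) = f y := hf' y _ (by simp)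
      have hlen1 : (f y).length = 0 := by rw [← h1]; simp
      have h2 : ((Walk.cons hadj Walk.nil).copy rfl (by rw [hr, ← hy0]) : G.Walk x (root x))
          = f x := hf' x _ (by simp [hadj.ne])
      have hlen2 : (f x).length = 1 := by rw [← h2]; simp
      omega
    have hnsup : y ∉ (f x).support := by
      intro hysup
      have htu : (f x).takeUntil y hysup = Walk.cons hadj Walk.nil := by
        have := h.path_unique ⟨(f x).takeUntil y hysup, (hf x).takeUntil hysup⟩
          ⟨Walk.cons hadj Walk.nil, by simp [hadj.ne]⟩
        exact Subtype.ext_iff.mp this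
      have hdu : ((f x).dropUntil y hysup).copy rfl hr = f y :=
        hf' y _ (by simp [(hf x).dropUntil hysup])
      have hspec := (f x).take_spec hysup
      have hlen := congrArg Walk.length hspec
      rw [Walk.length_append, htu] at hlen
      have : ((f x).dropUntil y hysup).length = (f y).length := by
        rw [← hdu]; simp
      simp at hlen
      omega
    have hcons : (Walk.cons hadj.symm (f x)).copy rfl hr = f y :=
      hf' y _ (by simp [Walk.cons_isPath_iff, hf x, hnsup])
    refine ⟨hy, ?_⟩
    rw [hF]
    simp only [hy, dif_neg, not_false_iff]
    rw [Walk.edge_firstDart]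
    rw [← hcons]
    simp [Sym2.eq_swap]
  have hsurj : Set.SurjOn F (univ.filter (fun v => v ≠ root v) : Finset V) G.edgeFinset := by
    intro e he
    simp only [Finset.coe_filter, Set.mem_setOf_eq, Finset.mem_coe, mem_edgeFinset] at he ⊢
    induction e with
    | _ x y =>
      rw [SimpleGraph.mem_edgeSet] at he
      rcases le_total (f x).length (f y).length with hle | hle
      · obtain ⟨hy, hFy⟩ := key x y he hle
        exact ⟨y, ⟨mem_univ y, hy⟩, hFy⟩
      · obtain ⟨hx, hFx⟩ := key y x he.symm hle
        exact ⟨x, ⟨mem_univ x, hx⟩, by rw [hFx, Sym2.eq_swap]⟩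
  have hsub : (univ.filter (fun v => v ≠ root v) : Finset V) ⊆ univ.erase (root v0) := by
    intro v hv
    simp only [Finset.mem_filter, Finset.mem_univ, true_and] at hv
    refine Finset.mem_erase.2 ⟨?_, mem_univ v⟩
    intro hveq
    exact hv (by rw [hveq, hrootroot])
  calc G.edgeFinset.card ≤ (univ.filter (fun v => v ≠ root v) : Finset V).card :=
        Finset.card_le_card_of_surjOn F hsurj
    _ ≤ (univ.erase (root v0)).card := Finset.card_le_card hsub
    _ < Fintype.card V := by
        rw [Finset.card_erase_of_mem (mem_univ _), Finset.card_univ]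
        have := Fintype.card_pos (α := V)
        omega


lemma edge_lower {V : Type} [Fintype V] [DecidableEq V] (G : SimpleGraph V)
    [DecidableRel G.Adj] (n : ℕ) (V1 V2 : Finset V)
    (hdisj : Disjoint V1 V2) (hunion : V1 ∪ V2 = Finset.univ)
    (hc1 : V1.card = n) (hc2 : V2.card = n)
    (hbip : ∀ u v, G.Adj u v → (u ∈ V1 ∧ v ∈ V2) ∨ (u ∈ V2 ∧ v ∈ V1))
    (hdeg : ∀ v, n + 2 ≤ 2 * G.degree v)
    (S : Finset V) (hS : S.card = n + 2)
    (hle : (S ∩ V1).card ≤ (S ∩ V2).card)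
    [Fintype (G.induce (S : Set V)).edgeSet] :
    n + 2 ≤ (G.induce (S : Set V)).edgeFinset.card := by
  classical
  set A := S ∩ V1 with hA
  set B := S ∩ V2 with hB
  set a := A.card
  set b := B.card
  have hBV2 : B ⊆ V2 := inter_subset_right
  have hAV1 : A ⊆ V1 := inter_subset_right
  have hbn : b ≤ n := hc2 ▸ card_le_card hBV2
  have han : a ≤ n := hc1 ▸ card_le_card hAV1
  have hab : a + b = n + 2 := by
    have hdAB : Disjoint A B := hdisj.mono hAV1 hBV2
    have hABS : A ∪ B = S := by
      rw [hA, hB, ← inter_union_distrib_left, hunion, inter_univ]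
    rw [← card_union_of_disjoint hdAB, hABS, hS]
  -- per-vertex bound
  have hnbhd : ∀ u ∈ A, G.neighborFinset u ⊆ V2 := by
    intro u hu v hv
    rw [mem_neighborFinset] at hv
    rcases hbip u v hv with ⟨_, h2⟩ | ⟨h1, _⟩
    · exact h2
    · exact absurd (hAV1 hu) (fun h => (Finset.disjoint_left.mp hdisj) h h1)
  have hvert : ∀ u ∈ A, G.degree u ≤ (B.filter (G.Adj u)).card + (n - b) := by
    intro u hu
    have h1 : G.neighborFinset u ∩ B = B.filter (G.Adj u) := by
      ext v; simp [mem_neighborFinset, and_comm]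
    have h2 : (G.neighborFinset u) \ B ⊆ V2 \ B :=
      sdiff_subset_sdiff (hnbhd u hu) le_rfl
    have h3 : ((G.neighborFinset u) \ B).card ≤ n - b := by
      refine le_trans (card_le_card h2) ?_
      rw [card_sdiff_of_subset hBV2, hc2]
    have h4 := card_inter_add_card_sdiff (G.neighborFinset u) B
    rw [← card_neighborFinset_eq_degree, ← h4, h1]
    omega
  -- sum over A
  set T := ∑ u ∈ A, (B.filter (G.Adj u)).card with hT
  have hsum : a * (n + 2) ≤ 2 * T + 2 * (a * (n - b)) := by
    have l1 : a * (n + 2) ≤ ∑ u ∈ A, 2 * G.degree u := by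
      rw [← smul_eq_mul]
      exact Finset.card_nsmul_le_sum A _ _ (fun u _ => hdeg u)
    have l2 : ∑ u ∈ A, 2 * G.degree u ≤ 2 * T + 2 * (a * (n - b)) := by
      calc ∑ u ∈ A, 2 * G.degree u
          ≤ ∑ u ∈ A, (2 * (B.filter (G.Adj u)).card + 2 * (n - b)) := by
            refine Finset.sum_le_sum (fun u hu => ?_)
            have := hvert u hu
            omega
        _ = 2 * T + 2 * (a * (n - b)) := by
            rw [Finset.sum_add_distrib, ← Finset.mul_sum, ← hT, Finset.sum_const, smul_eq_mul]
            ring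
    exact le_trans l1 l2
  -- T = card of pair set
  set P := (A ×ˢ B).filter (fun p => G.Adj p.1 p.2) with hP
  have hPT : P.card = T := by
    rw [hP, hT, Finset.card_filter, Finset.sum_product]
    refine Finset.sum_congr rfl (fun u _ => ?_)
    rw [Finset.card_filter]
  -- injection into edges
  obtain ⟨s0, hs0⟩ := Finset.card_pos.mp (show 0 < S.card by omega)
  have hs0' : s0 ∈ (S : Set V) := hs0
  set ff : V × V → Sym2 (S : Set V) := fun p =>
    if h : p.1 ∈ (S : Set V) ∧ p.2 ∈ (S : Set V) then s(⟨p.1, h.1⟩, ⟨p.2, h.2⟩)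
    else s(⟨s0, hs0'⟩, ⟨s0, hs0'⟩) with hff
  have hcard : P.card ≤ (G.induce (S : Set V)).edgeFinset.card := by
    refine Finset.card_le_card_of_injOn ff ?_ ?_
    · intro p hp
      rw [hP, Finset.mem_coe, Finset.mem_filter, Finset.mem_product] at hp
      obtain ⟨⟨hp1, hp2⟩, hadj⟩ := hp
      have m1 : p.1 ∈ (S : Set V) := Finset.mem_coe.mpr (Finset.mem_of_mem_inter_left hp1)
      have m2 : p.2 ∈ (S : Set V) := Finset.mem_coe.mpr (Finset.mem_of_mem_inter_left hp2)
      rw [hff]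
      simp only [dif_pos (And.intro m1 m2)]
      rw [Finset.mem_coe, mem_edgeFinset, SimpleGraph.mem_edgeSet]
      exact hadj
    · intro p hp q hq heq
      simp only [hP, Finset.coe_filter, Set.mem_setOf_eq, Finset.mem_product] at hp hq
      obtain ⟨⟨hp1, hp2⟩, _⟩ := hp
      obtain ⟨⟨hq1, hq2⟩, _⟩ := hq
      have mp1 : p.1 ∈ (S : Set V) := Finset.mem_coe.mpr (Finset.mem_of_mem_inter_left hp1)
      have mp2 : p.2 ∈ (S : Set V) := Finset.mem_coe.mpr (Finset.mem_of_mem_inter_left hp2)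
      have mq1 : q.1 ∈ (S : Set V) := Finset.mem_coe.mpr (Finset.mem_of_mem_inter_left hq1)
      have mq2 : q.2 ∈ (S : Set V) := Finset.mem_coe.mpr (Finset.mem_of_mem_inter_left hq2)
      rw [hff] at heq
      simp only [dif_pos (And.intro mp1 mp2), dif_pos (And.intro mq1 mq2)] at heq
      rw [Sym2.eq_iff] at heq
      rcases heq with ⟨h1, h2⟩ | ⟨h1, h2⟩
      · exact Prod.ext (congrArg Subtype.val h1) (congrArg Subtype.val h2)
      · exfalso
        have e1 : p.1 = q.2 := congrArg Subtype.val h1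
        exact (Finset.disjoint_left.mp hdisj) (Finset.mem_of_mem_inter_right hp1)
          (e1 ▸ Finset.mem_of_mem_inter_right hq2)
  -- arithmetic
  have ha2 : 2 ≤ a := by omega
  have hfin : a * (n + 2) ≤ 2 * (G.induce (S : Set V)).edgeFinset.card + 2 * (a * (n - b)) := by
    omega
  have hnb : n - b = a - 2 := by omega
  rw [hnb] at hfin
  set e := (G.induce (S : Set V)).edgeFinset.card
  zify [ha2, hab] at hfin ⊢
  nlinarith [mul_nonneg (by omega : (0:ℤ) ≤ (a:ℤ) - 2) (by omega : (0:ℤ) ≤ (b:ℤ) - (a:ℤ))]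


theorem stmt2 {V : Type} [Fintype V] [DecidableEq V] (G : SimpleGraph V)
    [DecidableRel G.Adj] (n : ℕ) (V1 V2 : Finset V)
    (hdisj : Disjoint V1 V2) (hunion : V1 ∪ V2 = Finset.univ)
    (hc1 : V1.card = n) (hc2 : V2.card = n)
    (hbip : ∀ u v, G.Adj u v → (u ∈ V1 ∧ v ∈ V2) ∨ (u ∈ V2 ∧ v ∈ V1))
    (hdeg : ∀ v, n + 2 ≤ 2 * G.degree v)
    (S : Finset V) (hS : S.card = n + 2) :
    n + 2 ≤ ((G.induce (S : Set V)).edgeSet).ncard ∧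
      ¬ (G.induce (S : Set V)).IsAcyclic := by
  classical
  letI : Fintype ((G.induce (S : Set V)).edgeSet) := Fintype.ofFinite _
  have hedge : n + 2 ≤ (G.induce (S : Set V)).edgeFinset.card := by
    rcases le_total (S ∩ V1).card (S ∩ V2).card with h | h
    · exact edge_lower G n V1 V2 hdisj hunion hc1 hc2 hbip hdeg S hS h
    · exact edge_lower G n V2 V1 hdisj.symm (by rw [union_comm]; exact hunion) hc2 hc1
        (fun u v hadj => (hbip u v hadj).symm) hdeg S hS h
  have hncard : ((G.induce (S : Set V)).edgeSet).ncard
      = (G.induce (S : Set V)).edgeFinset.card := by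
    rw [Set.ncard_eq_toFinset_card']
    rfl
  have hcardS : Fintype.card ((S : Set V) : Type) = n + 2 := by
    rw [← hS, ← Set.toFinset_card]
    congr 1
    exact Finset.toFinset_coe S
  refine ⟨by rw [hncard]; exact hedge, fun hacyc => ?_⟩
  haveI : Nonempty ((S : Set V) : Type) := by
    rw [← Fintype.card_pos_iff, hcardS]
    omega
  have := forest_lt (G.induce (S : Set V)) hacyc
  rw [hcardS] at this
  omega
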